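/- Let u ∈ C⁴([a,b]) satisfy u(a) = u(b) = u''(a) = u''(b) = 0 and u⁗(t) ≥ 0 for all t ∈ [a,b], with u⁗ not identically zero. Then u''(t) < 0 for all t ∈ (a,b). -/
import Mathlib


open Set

/-- If `u ∈ C⁴([a,b])` satisfies the simply supported beam conditions,
`u⁗ ≥ 0` on `[a,b]` and `u⁗ ≢ 0`, then `u'' < 0` on `(a,b)`. -/
theorem stmt3 (a b : ℝ) (hab : a < b) (u u1 u2 u3 u4 : ℝ → ℝ)
    (hd1 : ∀ t ∈ Icc a b, HasDerivWithinAt u (u1 t) (Icc a b) t)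
    (hd2 : ∀ t ∈ Icc a b, HasDerivWithinAt u1 (u2 t) (Icc a b) t)
    (hd3 : ∀ t ∈ Icc a b, HasDerivWithinAt u2 (u3 t) (Icc a b) t)
    (hd4 : ∀ t ∈ Icc a b, HasDerivWithinAt u3 (u4 t) (Icc a b) t)
    (hcont : ContinuousOn u4 (Icc a b))
    (hua : u a = 0) (hub : u b = 0) (hu2a : u2 a = 0) (hu2b : u2 b = 0)
    (hpos : ∀ t ∈ Icc a b, 0 ≤ u4 t)
    (hne : ∃ t ∈ Icc a b, u4 t ≠ 0) :
    ∀ t ∈ Ioo a b, u2 t < 0 := by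
  have hcb : ContinuousOn u2 (Icc a b) := fun t ht => (hd3 t ht).continuousWithinAt
  have hc3 : ContinuousOn u3 (Icc a b) := fun t ht => (hd4 t ht).continuousWithinAt
  have hmemab : ∀ x ∈ Ioo a b, Icc a b ∈ nhds x := fun x hx => Icc_mem_nhds hx.1 hx.2
  have hda2 : ∀ x ∈ Ioo a b, HasDerivAt u2 (u3 x) x := fun x hx =>
    (hd3 x (Ioo_subset_Icc_self hx)).hasDerivAt (hmemab x hx)
  have hda3 : ∀ x ∈ Ioo a b, HasDerivAt u3 (u4 x) x := fun x hx =>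
    (hd4 x (Ioo_subset_Icc_self hx)).hasDerivAt (hmemab x hx)
  have hmono3 : MonotoneOn u3 (Icc a b) := by
    apply monotoneOn_of_deriv_nonneg (convex_Icc a b) hc3
    · intro x hx
      rw [interior_Icc] at hx
      exact (hda3 x hx).differentiableAt.differentiableWithinAt
    · intro x hx
      rw [interior_Icc] at hx
      rw [(hda3 x hx).deriv]
      exact hpos x (Ioo_subset_Icc_self hx)
  by_contra h
  push_neg at h
  obtain ⟨t0, ht0, ht0'⟩ := h
  obtain ⟨m, hm, hmax⟩ := (isCompact_Icc).exists_isMaxOn (nonempty_Icc.2 hab.le) hcb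
  have hmax' : ∀ y ∈ Icc a b, u2 y ≤ u2 m := hmax
  have hex : ∃ c ∈ Ioo a b, ∀ y ∈ Icc a b, u2 y ≤ u2 c := by
    rcases eq_or_lt_of_le (hmax' t0 (Ioo_subset_Icc_self ht0)) with heq | hlt
    · exact ⟨t0, ht0, fun y hy => heq ▸ hmax' y hy⟩
    · refine ⟨m, ⟨?_, ?_⟩, hmax'⟩
      · rcases eq_or_lt_of_le hm.1 with h1 | h1
        · exfalso; rw [← h1, hu2a] at hlt; linarith
        · exact h1
      · rcases eq_or_lt_of_le hm.2 with h1 | h1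
        · exfalso; rw [h1, hu2b] at hlt; linarith
        · exact h1
  obtain ⟨c, hc, hcmax⟩ := hex
  have hc' : c ∈ Icc a b := Ioo_subset_Icc_self hc
  have hu3c : u3 c = 0 := by
    have hloc : IsLocalMax u2 c := by
      apply Filter.eventually_of_mem (hmemab c hc)
      intro y hy; exact hcmax y hy
    exact hloc.hasDerivAt_eq_zero (hda2 c hc)
  have h3nonneg : ∀ x ∈ Icc c b, 0 ≤ u3 x := by
    intro x hx
    have := hmono3 hc' ⟨hc'.1.trans hx.1, hx.2⟩ hx.1
    linarith
  have h3nonpos : ∀ x ∈ Icc a c, u3 x ≤ 0 := by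
    intro x hx
    have := hmono3 ⟨hx.1, hx.2.trans hc'.2⟩ hc' hx.2
    linarith
  have hmono2 : MonotoneOn u2 (Icc c b) := by
    apply monotoneOn_of_deriv_nonneg (convex_Icc c b)
      (hcb.mono (Icc_subset_Icc hc'.1 le_rfl))
    · intro x hx; rw [interior_Icc] at hx
      have hx' : x ∈ Ioo a b := ⟨hc.1.trans hx.1, hx.2⟩
      exact (hda2 x hx').differentiableAt.differentiableWithinAt
    · intro x hx; rw [interior_Icc] at hx
      have hx' : x ∈ Ioo a b := ⟨hc.1.trans hx.1, hx.2⟩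
      rw [(hda2 x hx').deriv]
      exact h3nonneg x ⟨hx.1.le, hx.2.le⟩
  have hanti2 : AntitoneOn u2 (Icc a c) := by
    apply antitoneOn_of_deriv_nonpos (convex_Icc a c)
      (hcb.mono (Icc_subset_Icc le_rfl hc'.2))
    · intro x hx; rw [interior_Icc] at hx
      have hx' : x ∈ Ioo a b := ⟨hx.1, hx.2.trans hc.2⟩
      exact (hda2 x hx').differentiableAt.differentiableWithinAt
    · intro x hx; rw [interior_Icc] at hx
      have hx' : x ∈ Ioo a b := ⟨hx.1, hx.2.trans hc.2⟩
      rw [(hda2 x hx').deriv]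
      exact h3nonpos x ⟨hx.1.le, hx.2.le⟩
  have hc0 : u2 c = 0 := by
    have h1 : u2 c ≤ u2 b := hmono2 ⟨le_rfl, hc'.2⟩ ⟨hc.2.le, le_rfl⟩ hc.2.le
    have h2 : u2 a ≤ u2 c := hcmax a ⟨le_rfl, hab.le⟩
    rw [hu2b] at h1; rw [hu2a] at h2; linarith
  have hu2zero : ∀ s ∈ Icc a b, u2 s = 0 := by
    intro s hs
    have hle : u2 s ≤ 0 := hc0 ▸ hcmax s hs
    rcases le_total s c with h1 | h1
    · have := hanti2 ⟨hs.1, h1⟩ ⟨hc'.1, le_rfl⟩ h1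
      linarith
    · have := hmono2 ⟨le_rfl, hc'.2⟩ ⟨h1, hs.2⟩ h1
      linarith
  have hu3zero : ∀ s ∈ Icc a b, u3 s = 0 := by
    intro s hs
    have h1 : HasDerivWithinAt u2 (u3 s) (Icc a b) s := hd3 s hs
    have h2 : HasDerivWithinAt u2 0 (Icc a b) s := by
      have : HasDerivWithinAt (fun _ : ℝ => (0:ℝ)) 0 (Icc a b) s :=
        (hasDerivAt_const s (0:ℝ)).hasDerivWithinAt
      exact this.congr (fun y hy => hu2zero y hy) (hu2zero s hs)
    have hu := uniqueDiffOn_Icc hab s hs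
    rw [← h1.derivWithin hu]
    exact h2.derivWithin hu
  have hu4zero : ∀ s ∈ Icc a b, u4 s = 0 := by
    intro s hs
    have h1 : HasDerivWithinAt u3 (u4 s) (Icc a b) s := hd4 s hs
    have h2 : HasDerivWithinAt u3 0 (Icc a b) s := by
      have : HasDerivWithinAt (fun _ : ℝ => (0:ℝ)) 0 (Icc a b) s :=
        (hasDerivAt_const s (0:ℝ)).hasDerivWithinAt
      exact this.congr (fun y hy => hu3zero y hy) (hu3zero s hs)
    have hu := uniqueDiffOn_Icc hab s hs
    rw [← h1.derivWithin hu]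
    exact h2.derivWithin hu
  obtain ⟨t, ht, htne⟩ := hne
  exact htne (hu4zero t ht)
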